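/- If x^n is a sequence in the Baire space A^ℕ converging to x, then for every k there exists n_k such that for all n ≥ n_k, the ℓ²-distance between p_𝒢(x^n) and p_𝒢(x) is at most 1/2^{(k-1)/2} (in particular d_e(p_𝒢(x^n),p_𝒢(x))² ≤ 1/2^{k-1} whenever x^n agrees with x on the first k coordinates). -/

import Mathlib

open Classical in
/-- The coefficients `c_{a a' b}` of graph Lipscomb theory. -/
noncomputable def lipC {A : Type*} (Adj : A → A → Prop) (a a' b : A) : ℝ :=
  if a' = b then (if Adj a a' then 1 / 2 else 1 / 3) else 0

section Aux

variable {A : Type*} (Adj : A → A → Prop)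

lemma lipC_nonneg (a a' b : A) : 0 ≤ lipC Adj a a' b := by
  unfold lipC
  split
  · split <;> norm_num
  · exact le_rfl

lemma lipC_le_half (a a' b : A) : lipC Adj a a' b ≤ 1 / 2 := by
  unfold lipC
  split
  · split <;> norm_num
  · norm_num

/-- The `i`-th summand of the `b`-coordinate of `p x`. -/
noncomputable def lipT (x : ℕ → A) (i : ℕ) (b : A) : ℝ :=
  ∏ j ∈ Finset.range (i + 1), lipC Adj (x j) (x i) b

lemma lipT_nonneg (x : ℕ → A) (i : ℕ) (b : A) : 0 ≤ lipT Adj x i b :=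
  Finset.prod_nonneg fun j _ => lipC_nonneg Adj _ _ _

lemma lipT_le (x : ℕ → A) (i : ℕ) (b : A) : lipT Adj x i b ≤ (1 / 2) ^ (i + 1) := by
  calc lipT Adj x i b ≤ ∏ _j ∈ Finset.range (i + 1), (1 / 2 : ℝ) :=
        Finset.prod_le_prod (fun j _ => lipC_nonneg Adj _ _ _)
          (fun j _ => lipC_le_half Adj _ _ _)
    _ = (1 / 2) ^ (i + 1) := by rw [Finset.prod_const, Finset.card_range]

lemma lipT_eq_zero (x : ℕ → A) (i : ℕ) (b : A) (h : x i ≠ b) : lipT Adj x i b = 0 := by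
  apply Finset.prod_eq_zero (Finset.self_mem_range_succ i)
  unfold lipC
  rw [if_neg h]

lemma summable_lipT (x : ℕ → A) (b : A) : Summable fun i => lipT Adj x i b := by
  apply Summable.of_nonneg_of_le (fun i => lipT_nonneg Adj x i b)
    (fun i => lipT_le Adj x i b)
  have : Summable fun i : ℕ => (1 / 2 : ℝ) ^ i :=
    summable_geometric_of_lt_one (by norm_num) (by norm_num)
  simpa [pow_succ, mul_comm] using this.mul_right (1 / 2 : ℝ)

lemma summable_lipT_tail (x : ℕ → A) (b : A) (k : ℕ) :
    Summable fun i : ℕ => lipT Adj x (i + k) b := by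
  apply Summable.of_nonneg_of_le (fun i => lipT_nonneg Adj x (i + k) b)
    (fun i => lipT_le Adj x (i + k) b)
  have h : Summable fun i : ℕ => (1 / 2 : ℝ) ^ i :=
    summable_geometric_of_lt_one (by norm_num) (by norm_num)
  apply (h.mul_right ((1 / 2 : ℝ) ^ (k + 1))).congr
  intro i
  rw [← pow_add]
  congr 1

/-- Over any finite set of distinct coordinates, the `m`-th summands add up to
at most `(1/2)^(m+1)`, since only the coordinate `b = x m` can be nonzero. -/
lemma sum_lipT_le {B : Type*} (f : B → A) (hf : Function.Injective f)
    (S : Finset B) (x : ℕ → A) (m : ℕ) :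
    ∑ b ∈ S, lipT Adj x m (f b) ≤ (1 / 2) ^ (m + 1) := by
  by_cases h : ∃ b0 ∈ S, f b0 = x m
  · obtain ⟨b0, hb0, hfb0⟩ := h
    rw [Finset.sum_eq_single_of_mem b0 hb0 (fun b hb hne => lipT_eq_zero Adj x m (f b)
      (fun he => hne (hf (by rw [← he, hfb0]))))]
    exact lipT_le Adj x m (f b0)
  · push_neg at h
    rw [Finset.sum_eq_zero fun b hb => lipT_eq_zero Adj x m (f b) (fun he => h b hb he.symm)]
    positivity

/-- The tail sum of the geometric bound. -/
lemma tsum_tail_geom (k : ℕ) : ∑' i : ℕ, (1 / 2 : ℝ) ^ (i + k + 1) = (1 / 2) ^ k := by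
  have hgeom : ∑' i : ℕ, (1 / 2 : ℝ) ^ i = 2 := by
    rw [tsum_geometric_of_lt_one (by norm_num) (by norm_num)]; norm_num
  calc ∑' i : ℕ, (1 / 2 : ℝ) ^ (i + k + 1)
      = ∑' i : ℕ, (1 / 2 : ℝ) ^ i * (1 / 2) ^ (k + 1) := by
        congr 1; funext i; rw [← pow_add]; ring_nf
    _ = (∑' i : ℕ, (1 / 2 : ℝ) ^ i) * (1 / 2) ^ (k + 1) := tsum_mul_right
    _ = (1 / 2) ^ k := by rw [hgeom, pow_succ]; ring

end Aux

set_option maxHeartbeats 1000000 in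
/-- If `xⁿ → x` in the Baire space `A^ℕ` (i.e. for every `k` eventually `xⁿ`
agrees with `x` on the first `k` coordinates), then for every `k` there is `n_k`
such that for `n ≥ n_k` we have `‖p_𝒢(xⁿ) - p_𝒢(x)‖² ≤ 1/2^{k-1} = 2/2^k`; in
particular this square bound holds whenever `xⁿ` agrees with `x` on the first
`k` coordinates. -/
theorem stmt6 {A : Type*} (hA : ∃ a b : A, a ≠ b) (Adj : A → A → Prop)
    (hrefl : ∀ a, Adj a a) (hsymm : ∀ a b, Adj a b → Adj b a) (z : A)
    (p : (ℕ → A) → lp (fun _ : {a : A // a ≠ z} => ℝ) 2)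
    (hp : ∀ (x : ℕ → A) (b : {a : A // a ≠ z}),
      (p x : ∀ _ : {a : A // a ≠ z}, ℝ) b
        = ∑' i : ℕ, ∏ j ∈ Finset.range (i + 1), lipC Adj (x j) (x i) (b : A))
    (xs : ℕ → ℕ → A) (x : ℕ → A)
    (hconv : ∀ k : ℕ, ∃ N : ℕ, ∀ n ≥ N, ∀ m < k, xs n m = x m) :
    (∀ (n k : ℕ), (∀ m < k, xs n m = x m) → ‖p (xs n) - p x‖ ^ 2 ≤ 2 / 2 ^ k) ∧
    (∀ k : ℕ, ∃ N : ℕ, ∀ n ≥ N, ‖p (xs n) - p x‖ ^ 2 ≤ 2 / 2 ^ k) := by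
  have main : ∀ (n k : ℕ), (∀ m < k, xs n m = x m) → ‖p (xs n) - p x‖ ^ 2 ≤ 2 / 2 ^ k := by
    intro n k hagree
    set y := xs n with hy
    -- tail sums
    set sY : {a : A // a ≠ z} → ℝ := fun b => ∑' i : ℕ, lipT Adj y (i + k) (b : A) with hsY
    set sX : {a : A // a ≠ z} → ℝ := fun b => ∑' i : ℕ, lipT Adj x (i + k) (b : A) with hsX
    have hsYnn : ∀ b, 0 ≤ sY b := fun b => tsum_nonneg fun i => lipT_nonneg Adj y _ _
    have hsXnn : ∀ b, 0 ≤ sX b := fun b => tsum_nonneg fun i => lipT_nonneg Adj x _ _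
    have hsumY : ∀ b : {a : A // a ≠ z}, Summable fun i : ℕ => lipT Adj y (i + k) (b : A) :=
      fun b => summable_lipT_tail Adj y (b : A) k
    have hsumX : ∀ b : {a : A // a ≠ z}, Summable fun i : ℕ => lipT Adj x (i + k) (b : A) :=
      fun b => summable_lipT_tail Adj x (b : A) k
    -- coordinatewise difference
    have hdiff : ∀ b : {a : A // a ≠ z}, ((p y - p x : lp (fun _ : {a : A // a ≠ z} => ℝ) 2) : ∀ _ : {a : A // a ≠ z}, ℝ) b = sY b - sX b := by
      intro b
      have hcoe : ((p y - p x : lp (fun _ : {a : A // a ≠ z} => ℝ) 2) : ∀ _ : {a : A // a ≠ z}, ℝ) b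
          = (p y : ∀ _ : {a : A // a ≠ z}, ℝ) b - (p x : ∀ _ : {a : A // a ≠ z}, ℝ) b := by
        rw [lp.coeFn_sub]; rfl
      rw [hcoe, hp, hp]
      have hYsplit := Summable.sum_add_tsum_nat_add (f := fun i => lipT Adj y i (b : A)) k
        (summable_lipT Adj y (b : A))
      have hXsplit := Summable.sum_add_tsum_nat_add (f := fun i => lipT Adj x i (b : A)) k
        (summable_lipT Adj x (b : A))
      have hhead : ∑ i ∈ Finset.range k, lipT Adj y i (b : A)
          = ∑ i ∈ Finset.range k, lipT Adj x i (b : A) := by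
        apply Finset.sum_congr rfl
        intro i hi
        have hik : i < k := Finset.mem_range.mp hi
        unfold lipT
        apply Finset.prod_congr rfl
        intro j hj
        have hjk : j < k := lt_of_le_of_lt (Nat.lt_succ_iff.mp (Finset.mem_range.mp hj)) hik
        rw [hagree j hjk, hagree i hik]
      calc (∑' i : ℕ, lipT Adj y i (b : A)) - ∑' i : ℕ, lipT Adj x i (b : A)
          = (∑ i ∈ Finset.range k, lipT Adj y i (b : A) + sY b)
            - (∑ i ∈ Finset.range k, lipT Adj x i (b : A) + sX b) := by
            rw [hYsplit, hXsplit]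
        _ = sY b - sX b := by rw [hhead]; ring
    -- bounds on finite sums of tails
    have htail : ∀ (w : ℕ → A) (S : Finset {a : A // a ≠ z}),
        (∑ b ∈ S, ∑' i : ℕ, lipT Adj w (i + k) (b : A)) ≤ (1 / 2) ^ k := by
      intro w S
      have hsumw : ∀ b : {a : A // a ≠ z}, Summable fun i : ℕ => lipT Adj w (i + k) (b : A) :=
        fun b => summable_lipT_tail Adj w (b : A) k
      rw [← Summable.tsum_finsetSum (fun b _ => hsumw b)]
      have hle : ∑' i : ℕ, (∑ b ∈ S, lipT Adj w (i + k) (b : A))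
          ≤ ∑' i : ℕ, (1 / 2 : ℝ) ^ (i + k + 1) := by
        apply Summable.tsum_le_tsum
        · intro i
          exact sum_lipT_le Adj (fun b : {a : A // a ≠ z} => (b : A)) Subtype.val_injective S w (i + k)
        · exact summable_sum fun b _ => hsumw b
        · have : Summable fun i : ℕ => (1 / 2 : ℝ) ^ i :=
            summable_geometric_of_lt_one (by norm_num) (by norm_num)
          have h2 := (this.mul_right ((1 / 2 : ℝ) ^ (k + 1)))
          apply h2.congr
          intro i
          rw [← pow_add]; ring_nf
        -- done
      calc ∑' i : ℕ, (∑ b ∈ S, lipT Adj w (i + k) (b : A))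
          ≤ ∑' i : ℕ, (1 / 2 : ℝ) ^ (i + k + 1) := hle
        _ = (1 / 2) ^ k := tsum_tail_geom k
    -- norm squared as tsum
    have h2pos : (0 : ℝ) < (2 : ENNReal).toReal := by norm_num
    have hnorm : ‖p y - p x‖ ^ (2 : ℝ)
        = ∑' b : {a : A // a ≠ z}, ‖((p y - p x : lp (fun _ : {a : A // a ≠ z} => ℝ) 2) : ∀ _ : {a : A // a ≠ z}, ℝ) b‖ ^ (2 : ℝ) := by
      have := lp.norm_rpow_eq_tsum (p := 2) h2pos (p y - p x)
      simpa using this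
    have hsummable : Summable fun b : {a : A // a ≠ z} =>
        ‖((p y - p x : lp (fun _ : {a : A // a ≠ z} => ℝ) 2) : ∀ _ : {a : A // a ≠ z}, ℝ) b‖ ^ (2 : ℝ) := by
      have := (lp.memℓp (p y - p x)).summable h2pos
      simpa using this
    have hbound : ∑' b : {a : A // a ≠ z}, ‖((p y - p x : lp (fun _ : {a : A // a ≠ z} => ℝ) 2) : ∀ _ : {a : A // a ≠ z}, ℝ) b‖ ^ (2 : ℝ)
        ≤ 2 / 2 ^ k := by
      apply Summable.tsum_le_of_sum_le hsummable
      intro S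
      have hterm : ∀ b ∈ S, ‖((p y - p x : lp (fun _ : {a : A // a ≠ z} => ℝ) 2) : ∀ _ : {a : A // a ≠ z}, ℝ) b‖ ^ (2 : ℝ)
          ≤ sY b ^ 2 + sX b ^ 2 := by
        intro b _
        rw [Real.rpow_two, Real.norm_eq_abs, sq_abs, hdiff b]
        nlinarith [mul_nonneg (hsYnn b) (hsXnn b)]
      calc ∑ b ∈ S, ‖((p y - p x : lp (fun _ : {a : A // a ≠ z} => ℝ) 2) : ∀ _ : {a : A // a ≠ z}, ℝ) b‖ ^ (2 : ℝ)
          ≤ ∑ b ∈ S, (sY b ^ 2 + sX b ^ 2) := Finset.sum_le_sum hterm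
        _ = (∑ b ∈ S, sY b ^ 2) + ∑ b ∈ S, sX b ^ 2 := Finset.sum_add_distrib
        _ ≤ (∑ b ∈ S, sY b) ^ 2 + (∑ b ∈ S, sX b) ^ 2 := by
            gcongr ?_ + ?_ <;>
              exact Finset.sum_sq_le_sq_sum_of_nonneg (by intro b _; first
                | exact hsYnn b | exact hsXnn b)
        _ ≤ ((1 / 2 : ℝ) ^ k) ^ 2 + ((1 / 2 : ℝ) ^ k) ^ 2 := by
            gcongr ?_ + ?_
            · exact pow_le_pow_left₀ (Finset.sum_nonneg fun b _ => hsYnn b) (htail y S) 2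
            · exact pow_le_pow_left₀ (Finset.sum_nonneg fun b _ => hsXnn b) (htail x S) 2
        _ = 2 / ((2:ℝ) ^ k) ^ 2 := by simp only [one_div, inv_pow]; ring
        _ ≤ 2 / 2 ^ k := by
            have h1 : (1:ℝ) ≤ 2 ^ k := one_le_pow₀ (by norm_num)
            have h0 : (0:ℝ) < 2 ^ k := by positivity
            rw [div_le_div_iff₀ (by positivity) h0]
            nlinarith
    have : ‖p y - p x‖ ^ (2 : ℝ) ≤ 2 / 2 ^ k := hnorm ▸ hbound
    calc ‖p y - p x‖ ^ 2 = ‖p y - p x‖ ^ (2 : ℝ) := by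
          rw [← Real.rpow_natCast ‖p y - p x‖ 2]; norm_num
      _ ≤ 2 / 2 ^ k := this
  refine ⟨main, fun k => ?_⟩
  obtain ⟨N, hN⟩ := hconv k
  exact ⟨N, fun n hn => main n k (hN n hn)⟩
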